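/- Every finite p-group possessing a cyclic maximal subgroup has dismantlable subgroup lattice. -/

import Mathlib

/-- A finite lattice `L` with `n` elements is *dismantlable* if there is a chain
`L₁ ⊆ L₂ ⊆ ... ⊆ Lₙ = L` of sublattices of `L` with `|Lᵢ| = i` for `i = 1, ..., n`. -/
def Dismantlable (L : Type*) [Lattice L] [Finite L] : Prop :=
  ∃ c : ℕ → Set L,
    (∀ i, 1 ≤ i → i ≤ Nat.card L → IsSublattice (c i) ∧ Nat.card (c i) = i) ∧
    (∀ i, 1 ≤ i → i < Nat.card L → c i ⊆ c (i + 1)) ∧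
    c (Nat.card L) = Set.univ

/-- `x 0, y 0, x 1, y 1, ..., x (n-1), y (n-1)` form a *crown of order `2n`* (for `n ≥ 3`)
in a poset: the `2n` elements are pairwise distinct, and the only comparability relations
among them are `x i ≤ y i` and `x (i+1) ≤ y i` (indices mod `n`). -/
def IsCrown {P : Type*} [PartialOrder P] {n : ℕ} (x y : Fin n → P) : Prop :=
  3 ≤ n ∧ Function.Injective x ∧ Function.Injective y ∧
  (∀ i j, x i ≠ y j) ∧
  (∀ i j, x i ≤ x j → i = j) ∧
  (∀ i j, y i ≤ y j → i = j) ∧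
  (∀ i j, ¬ y i ≤ x j) ∧
  (∀ i j, x i ≤ y j ↔ (i = j ∨ (i : ℕ) = ((j : ℕ) + 1) % n))

open Finset in
/-- If a finite lattice admits an injective "key" function `κ : L → ℕ` such that
`κ (a ⊔ b) ≤ max (κ a) (κ b)` and `κ (a ⊓ b) ≤ max (κ a) (κ b)`, then listing the
elements in increasing order of key makes every initial segment a sublattice, so the
lattice is dismantlable. -/
theorem dismantlable_of_key {L : Type*} [Lattice L] [Finite L] (κ : L → ℕ)
    (hinj : Function.Injective κ)
    (hsup : ∀ a b : L, κ (a ⊔ b) ≤ max (κ a) (κ b))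
    (hinf : ∀ a b : L, κ (a ⊓ b) ≤ max (κ a) (κ b)) : Dismantlable L := by
  classical
  rcases isEmpty_or_nonempty L with hL | hL
  · have h0 : Nat.card L = 0 := by simp [Nat.card_eq_fintype_card]
    exact ⟨fun _ => Set.univ, fun i h1 h2 => by omega, fun i h1 h2 => by omega, rfl⟩
  cases nonempty_fintype L
  have hn : Nat.card L = Fintype.card L := Nat.card_eq_fintype_card
  set n := Fintype.card L with hndef
  -- the position of `a` in the sorted order
  set idx : L → ℕ := fun a => #(univ.filter fun b => κ b < κ a) with hidx
  have hmono : ∀ {a b : L}, κ a ≤ κ b → idx a ≤ idx b := by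
    intro a b h
    exact Finset.card_le_card (Finset.monotone_filter_right _ fun c _ hc => lt_of_lt_of_le hc h)
  have hlt : ∀ a, idx a < n := by
    intro a
    have hsub : (univ.filter fun b => κ b < κ a) ⊆ univ.erase a := by
      intro x hx
      simp only [mem_filter] at hx
      exact mem_erase.mpr ⟨fun h => by simp [h] at hx, mem_univ x⟩
    calc idx a ≤ #(univ.erase a) := Finset.card_le_card hsub
      _ < n := by
          rw [Finset.card_erase_of_mem (mem_univ a), Finset.card_univ]
          have : 0 < n := Fintype.card_pos
          omega
  have hstrict : ∀ {a b : L}, κ a < κ b → idx a < idx b := by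
    intro a b h
    apply Finset.card_lt_card
    rw [Finset.ssubset_iff_of_subset (Finset.monotone_filter_right _ fun c _ hc => lt_trans hc h)]
    exact ⟨a, by simp [h], by simp⟩
  have hidxinj : Function.Injective idx := by
    intro a b h
    rcases lt_trichotomy (κ a) (κ b) with hk | hk | hk
    · exact absurd h (Nat.ne_of_lt (hstrict hk))
    · exact hinj hk
    · exact absurd h.symm (Nat.ne_of_lt (hstrict hk))
  have himg : univ.image idx = range n := by
    apply Finset.eq_of_subset_of_card_le
    · intro x hx
      simp only [mem_image] at hx
      obtain ⟨a, -, rfl⟩ := hx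
      exact mem_range.mpr (hlt a)
    · rw [Finset.card_range, Finset.card_image_of_injective _ hidxinj, card_univ]
  have hcard : ∀ i ≤ n, #(univ.filter fun a => idx a < i) = i := by
    intro i hi
    have h1 : ((univ.filter fun a => idx a < i).image idx).card
        = #(univ.filter fun a => idx a < i) :=
      Finset.card_image_of_injective _ hidxinj
    have h2 : (univ.filter fun a => idx a < i).image idx = range i := by
      have := (Finset.filter_image (f := idx) (s := (univ : Finset L))
        (p := fun m => m < i)).symm
      rw [himg] at this
      rw [this]
      ext x
      simp only [mem_filter, mem_range]
      omega
    rw [← h1, h2, Finset.card_range]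
  refine ⟨fun i => ↑(univ.filter fun a => idx a < i), ?_, ?_, ?_⟩
  · intro i _ hi
    constructor
    · constructor
      · intro a ha b hb
        simp only [Finset.coe_filter, Set.mem_setOf_eq, mem_univ, true_and] at ha hb ⊢
        have := hsup a b
        rcases max_cases (κ a) (κ b) with ⟨h1, -⟩ | ⟨h1, -⟩ <;> rw [h1] at this
        · exact lt_of_le_of_lt (hmono this) ha
        · exact lt_of_le_of_lt (hmono this) hb
      · intro a ha b hb
        simp only [Finset.coe_filter, Set.mem_setOf_eq, mem_univ, true_and] at ha hb ⊢
        have := hinf a b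
        rcases max_cases (κ a) (κ b) with ⟨h1, -⟩ | ⟨h1, -⟩ <;> rw [h1] at this
        · exact lt_of_le_of_lt (hmono this) ha
        · exact lt_of_le_of_lt (hmono this) hb
    · rw [Nat.card_coe_set_eq, Set.ncard_coe_finset, hcard i (by omega)]
  · intro i _ _ a ha
    simp only [Finset.coe_filter, Set.mem_setOf_eq, mem_univ, true_and] at ha ⊢
    omega
  · rw [hn]
    apply Set.eq_univ_of_forall
    intro a
    simp only [Finset.coe_filter, Set.mem_setOf_eq, mem_univ, true_and]
    exact hlt a

/-- A sufficient condition for dismantlability: a rank function `ρ` such that joins and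
meets either equal one of the two arguments or have strictly smaller rank than one of them. -/
theorem dismantlable_of_rank {L : Type*} [Lattice L] [Finite L] (ρ : L → ℕ)
    (hsup : ∀ a b : L, a ⊔ b = a ∨ a ⊔ b = b ∨ ρ (a ⊔ b) < ρ a ∨ ρ (a ⊔ b) < ρ b)
    (hinf : ∀ a b : L, a ⊓ b = a ∨ a ⊓ b = b ∨ ρ (a ⊓ b) < ρ a ∨ ρ (a ⊓ b) < ρ b) :
    Dismantlable L := by
  classical
  cases nonempty_fintype L
  set N := Fintype.card L + 1 with hN
  set ι : L → ℕ := fun a => (Fintype.equivFin L a : ℕ) with hι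
  have hιN : ∀ a, ι a < N := fun a => lt_of_lt_of_le (Fintype.equivFin L a).isLt (by omega)
  have hιinj : Function.Injective ι := fun a b h =>
    (Fintype.equivFin L).injective (Fin.val_injective h)
  set κ : L → ℕ := fun a => ρ a * N + ι a with hκ
  have hmod : ∀ a, κ a % N = ι a := by
    intro a
    simp only [hκ]
    rw [Nat.add_comm, Nat.add_mul_mod_self_right, Nat.mod_eq_of_lt (hιN a)]
  have hinj : Function.Injective κ := by
    intro a b h
    apply hιinj
    rw [← hmod a, ← hmod b, h]
  have hkey : ∀ {a b : L}, ρ a < ρ b → κ a < κ b := by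
    intro a b h
    calc κ a = ρ a * N + ι a := rfl
      _ < ρ a * N + N := by have := hιN a; omega
      _ = (ρ a + 1) * N := by ring
      _ ≤ ρ b * N := Nat.mul_le_mul_right N h
      _ ≤ κ b := Nat.le_add_right _ _
  apply dismantlable_of_key κ hinj
  · intro a b
    rcases hsup a b with h | h | h | h
    · rw [h]; exact le_max_left _ _
    · rw [h]; exact le_max_right _ _
    · exact le_max_of_le_left (le_of_lt (hkey h))
    · exact le_max_of_le_right (le_of_lt (hkey h))
  · intro a b
    rcases hinf a b with h | h | h | h
    · rw [h]; exact le_max_left _ _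
    · rw [h]; exact le_max_right _ _
    · exact le_max_of_le_left (le_of_lt (hkey h))
    · exact le_max_of_le_right (le_of_lt (hkey h))

/-- Every finite `p`-group possessing a cyclic maximal subgroup has dismantlable
subgroup lattice. -/
theorem stmt14 {G : Type*} [Group G] [Finite G] (p : ℕ) (hp : p.Prime)
    (hG : IsPGroup p G) (M : Subgroup G) (hM : IsCoatom M) (hMc : IsCyclic M) :
    Dismantlable (Subgroup G) := by
  classical
  haveI : Fact p.Prime := ⟨hp⟩
  haveI : Group.IsNilpotent G := hG.isNilpotent
  haveI hMn : M.Normal :=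
    Subgroup.NormalizerCondition.normal_of_coatom M (normalizerCondition_of_isNilpotent (G := G)) hM
  cases nonempty_fintype ↥M
  have hMp : IsPGroup p ↥M := hG.to_subgroup M
  -- subgroups of the cyclic `p`-group `M` form a chain
  have keyM : ∀ X Y : Subgroup ↥M, X ≤ Y ∨ Y ≤ X := by
    have hmem : ∀ X Y : Subgroup ↥M, Nat.card X ∣ Nat.card Y → X ≤ Y := by
      intro X Y hd x hx
      have hYpos : 0 < Nat.card Y := Nat.card_pos
      have h1 : x ^ Nat.card Y = 1 := by
        apply orderOf_dvd_iff_pow_eq_one.mp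
        have : orderOf (⟨x, hx⟩ : X) ∣ Nat.card X := orderOf_dvd_natCard _
        rw [Subgroup.orderOf_mk] at this
        exact this.trans hd
      set S := (Finset.univ.filter fun y : ↥M => y ^ Nat.card Y = 1) with hS
      set T := (Finset.univ.filter fun y : ↥M => y ∈ Y) with hT
      have hTS : T ⊆ S := by
        intro y hy
        simp only [hT, Finset.mem_filter] at hy
        simp only [hS, Finset.mem_filter]
        refine ⟨Finset.mem_univ y, ?_⟩
        have : ((⟨y, hy.2⟩ : Y) : ↥M) ^ Nat.card Y = 1 := by
          rw [← SubgroupClass.coe_pow, pow_card_eq_one']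
          rfl
        simpa using this
      have hTcard : T.card = Nat.card Y := by
        rw [hT, ← Fintype.card_subtype, Nat.card_eq_fintype_card]
      have hScard : S.card ≤ Nat.card Y := IsCyclic.card_pow_eq_one_le hYpos
      have hST : S = T := (Finset.eq_of_subset_of_card_le hTS (by omega)).symm
      have hxS : x ∈ S := Finset.mem_filter.mpr ⟨Finset.mem_univ x, h1⟩
      rw [hST, hT] at hxS
      simpa using hxS
    intro X Y
    obtain ⟨a, ha⟩ := IsPGroup.iff_card.mp (hMp.to_subgroup X)
    obtain ⟨b, hb⟩ := IsPGroup.iff_card.mp (hMp.to_subgroup Y)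
    rcases le_total a b with h | h
    · exact Or.inl (hmem _ _ (by rw [ha, hb]; exact pow_dvd_pow p h))
    · exact Or.inr (hmem _ _ (by rw [ha, hb]; exact pow_dvd_pow p h))
  have chainM : ∀ A B : Subgroup G, A ≤ M → B ≤ M → A ≤ B ∨ B ≤ A := by
    intro A B hA hB
    rcases keyM (A.subgroupOf M) (B.subgroupOf M) with h | h
    · left
      have := Subgroup.map_subtype_le_map_subtype.mpr h
      rwa [Subgroup.subgroupOf_map_subtype, Subgroup.subgroupOf_map_subtype,
        inf_eq_left.mpr hA, inf_eq_left.mpr hB] at this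
    · right
      have := Subgroup.map_subtype_le_map_subtype.mpr h
      rwa [Subgroup.subgroupOf_map_subtype, Subgroup.subgroupOf_map_subtype,
        inf_eq_left.mpr hA, inf_eq_left.mpr hB] at this
  set g := Nat.card G with hg
  have cardle : ∀ H : Subgroup G, Nat.card H ≤ g := by
    intro H
    have := Subgroup.card_le_of_le (le_top (a := H))
    rwa [Subgroup.card_top] at this
  have cardM : Nat.card M < g := by
    refine lt_of_le_of_ne (cardle M) fun h => hM.1 ?_
    exact Subgroup.eq_top_of_card_eq M h
  -- the key intersection property coming from the Dedekind modular law
  have hmeet : ∀ H K : Subgroup G, ¬ H ≤ M → ¬ K ≤ M → ¬ (H ⊓ K ≤ M) → H ≤ K ∨ K ≤ H := by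
    intro H K _ _ hHK
    have hMlt : M < (H ⊓ K) ⊔ M :=
      lt_of_le_of_ne le_sup_right fun h => hHK (le_sup_left.trans h.symm.le)
    have htop : (H ⊓ K) ⊔ M = ⊤ := hM.2 _ hMlt
    have hdk : ∀ X : Subgroup G, H ⊓ K ≤ X → X ≤ (H ⊓ K) ⊔ (M ⊓ X) := by
      intro X hle x hx
      have hx' : x ∈ (H ⊓ K) ⊔ M := by rw [htop]; trivial
      rw [← SetLike.mem_coe, Subgroup.mul_normal] at hx'
      obtain ⟨k, hk, m, hm, rfl⟩ := hx'
      have hmX : m ∈ X := by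
        have : k⁻¹ * (k * m) ∈ X := mul_mem (inv_mem (hle hk)) hx
        simpa using this
      exact mul_mem (Subgroup.mem_sup_left hk)
        (Subgroup.mem_sup_right (Subgroup.mem_inf.mpr ⟨hm, hmX⟩))
    have hH' : H = (H ⊓ K) ⊔ (M ⊓ H) :=
      le_antisymm (hdk H inf_le_left) (sup_le inf_le_left inf_le_right)
    have hK' : K = (H ⊓ K) ⊔ (M ⊓ K) :=
      le_antisymm (hdk K inf_le_right) (sup_le inf_le_right inf_le_right)
    rcases chainM (M ⊓ H) (M ⊓ K) inf_le_left inf_le_left with h | h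
    · left
      calc H = (H ⊓ K) ⊔ (M ⊓ H) := hH'
        _ ≤ (H ⊓ K) ⊔ (M ⊓ K) := sup_le_sup_left h _
        _ = K := hK'.symm
    · right
      calc K = (H ⊓ K) ⊔ (M ⊓ K) := hK'
        _ ≤ (H ⊓ K) ⊔ (M ⊓ H) := sup_le_sup_left h _
        _ = H := hH'.symm
  -- the rank function
  refine dismantlable_of_rank
    (fun H : Subgroup G => if H ≤ M then Nat.card ↥H else 2 * g - Nat.card ↥H) ?_ ?_
  · intro a b
    beta_reduce
    by_cases ha : a ≤ M <;> by_cases hb : b ≤ M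
    · rcases chainM a b ha hb with h | h
      · exact Or.inr (Or.inl (sup_eq_right.mpr h))
      · exact Or.inl (sup_eq_left.mpr h)
    · have hab : ¬ (a ⊔ b ≤ M) := fun h => hb (le_sup_right.trans h)
      have h1 : Nat.card ↥b ≤ Nat.card ↥(a ⊔ b) := Subgroup.card_le_of_le le_sup_right
      rcases eq_or_lt_of_le h1 with h2 | h2
      · exact Or.inr (Or.inl (Subgroup.eq_of_le_of_card_ge le_sup_right h2.ge).symm)
      · refine Or.inr (Or.inr (Or.inr ?_))
        rw [if_neg hab, if_neg hb]
        have h3 := cardle (a ⊔ b)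
        omega
    · have hab : ¬ (a ⊔ b ≤ M) := fun h => ha (le_sup_left.trans h)
      have h1 : Nat.card ↥a ≤ Nat.card ↥(a ⊔ b) := Subgroup.card_le_of_le le_sup_left
      rcases eq_or_lt_of_le h1 with h2 | h2
      · exact Or.inl (Subgroup.eq_of_le_of_card_ge le_sup_left h2.ge).symm
      · refine Or.inr (Or.inr (Or.inl ?_))
        rw [if_neg hab, if_neg ha]
        have h3 := cardle (a ⊔ b)
        omega
    · have hab : ¬ (a ⊔ b ≤ M) := fun h => ha (le_sup_left.trans h)
      have h1 : Nat.card ↥a ≤ Nat.card ↥(a ⊔ b) := Subgroup.card_le_of_le le_sup_left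
      rcases eq_or_lt_of_le h1 with h2 | h2
      · exact Or.inl (Subgroup.eq_of_le_of_card_ge le_sup_left h2.ge).symm
      · refine Or.inr (Or.inr (Or.inl ?_))
        rw [if_neg hab, if_neg ha]
        have h3 := cardle (a ⊔ b)
        omega
  · intro a b
    beta_reduce
    by_cases ha : a ≤ M <;> by_cases hb : b ≤ M
    · rcases chainM a b ha hb with h | h
      · exact Or.inl (inf_eq_left.mpr h)
      · exact Or.inr (Or.inl (inf_eq_right.mpr h))
    · have hab : a ⊓ b ≤ M := inf_le_left.trans ha
      refine Or.inr (Or.inr (Or.inr ?_))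
      rw [if_pos hab, if_neg hb]
      have h1 : Nat.card ↥(a ⊓ b) ≤ Nat.card ↥M := Subgroup.card_le_of_le hab
      have h2 := cardle b
      omega
    · have hab : a ⊓ b ≤ M := inf_le_right.trans hb
      refine Or.inr (Or.inr (Or.inl ?_))
      rw [if_pos hab, if_neg ha]
      have h1 : Nat.card ↥(a ⊓ b) ≤ Nat.card ↥M := Subgroup.card_le_of_le hab
      have h2 := cardle a
      omega
    · by_cases hab : a ⊓ b ≤ M
      · refine Or.inr (Or.inr (Or.inl ?_))
        rw [if_pos hab, if_neg ha]
        have h1 : Nat.card ↥(a ⊓ b) ≤ Nat.card ↥M := Subgroup.card_le_of_le hab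
        have h2 := cardle a
        omega
      · rcases hmeet a b ha hb hab with h | h
        · exact Or.inl (inf_eq_left.mpr h)
        · exact Or.inr (Or.inl (inf_eq_right.mpr h))
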